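/- Say that a turn {d, d′} is crossed by an iterate of φ if there exist a generator e ∈ {a, b, c} and an integer k ≥ 1 such that the reduced word of φᵏ(e), written as a sequence of letters u₁u₂⋯u_m, has some consecutive pair u_i, u_{i+1} with {d, d′} = {u_i⁻¹, u_{i+1}}. Then the set of turns crossed by iterates of φ is exactly T = { {c⁻¹, a}, {a⁻¹, b}, {a⁻¹, c}, {b⁻¹, c}, {a⁻¹, a}, {b⁻¹, a} }, and the graph whose vertices are the six directions {a, b, c, a⁻¹, b⁻¹, c⁻¹} and whose edges are the six turns in T is connected (i.e., the local Whitehead graph of φ at the vertex of the rose is connected). -/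

import Mathlib

/-- The endomorphism of the free group `F₃` on generators `a = of 0`, `b = of 1`,
`c = of 2` determined by `φ(a) = cab`, `φ(b) = ca`, `φ(c) = acab`. -/
def phi : Monoid.End (FreeGroup (Fin 3)) :=
  FreeGroup.lift
    ![FreeGroup.of 2 * FreeGroup.of 0 * FreeGroup.of 1,
      FreeGroup.of 2 * FreeGroup.of 0,
      FreeGroup.of 0 * FreeGroup.of 2 * FreeGroup.of 0 * FreeGroup.of 1]

/-- A turn (an unordered pair of directions, a direction being `(i, true)` for the
letter `i` or `(i, false)` for its inverse) is crossed by an iterate of `φ` if,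
for some generator `e` and some `k ≥ 1`, the reduced word of `φᵏ(e)` has a pair of
consecutive letters `u, v` with the turn equal to `{u⁻¹, v}`. -/
def CrossedTurn (t : Sym2 (Fin 3 × Bool)) : Prop :=
  ∃ e : Fin 3, ∃ k : ℕ, 1 ≤ k ∧ ∃ u v : Fin 3 × Bool,
    [u, v] <:+: FreeGroup.toWord ((phi ^ k) (FreeGroup.of e)) ∧
      t = s((u.1, !u.2), v)

/-- The six turns of the local Whitehead graph of `φ`:
`{c⁻¹, a}`, `{a⁻¹, b}`, `{a⁻¹, c}`, `{b⁻¹, c}`, `{a⁻¹, a}`, `{b⁻¹, a}`. -/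
def T : Set (Sym2 (Fin 3 × Bool)) :=
  { s(((2 : Fin 3), false), ((0 : Fin 3), true)),
    s(((0 : Fin 3), false), ((1 : Fin 3), true)),
    s(((0 : Fin 3), false), ((2 : Fin 3), true)),
    s(((1 : Fin 3), false), ((2 : Fin 3), true)),
    s(((0 : Fin 3), false), ((0 : Fin 3), true)),
    s(((1 : Fin 3), false), ((0 : Fin 3), true)) }

/-! ### Auxiliary machinery -/

/-- Images of the generators as positive words. -/
def W : Fin 3 → List (Fin 3) := ![[2,0,1],[2,0],[0,2,0,1]]

/-- One substitution step on positive words. -/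
def app (l : List (Fin 3)) : List (Fin 3) := l.flatMap W

/-- Iterated substitution starting from a single generator. -/
def itw (k : ℕ) (e : Fin 3) : List (Fin 3) := app^[k] [e]

/-- Embed a positive word into the free group. -/
def emb (l : List (Fin 3)) : FreeGroup (Fin 3) :=
  FreeGroup.mk (l.map fun i => (i, true))

lemma emb_nil : emb [] = 1 := rfl

lemma emb_append (l₁ l₂ : List (Fin 3)) : emb (l₁ ++ l₂) = emb l₁ * emb l₂ := by
  simp [emb, FreeGroup.mul_mk]

lemma emb_of (x : Fin 3) : emb [x] = FreeGroup.of x := rfl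

lemma phi_of (x : Fin 3) : phi (FreeGroup.of x) = emb (W x) := by
  fin_cases x <;>
    simp [phi, FreeGroup.lift_apply_of, W, ← emb_of, ← emb_append] <;> rfl

lemma phi_emb (l : List (Fin 3)) : phi (emb l) = emb (app l) := by
  induction l with
  | nil => simp [emb_nil, app]
  | cons x l ih =>
    have : emb (x :: l) = FreeGroup.of x * emb l := by
      rw [← emb_of, ← emb_append]; rfl
    rw [this, map_mul, ih, phi_of, ← emb_append]
    simp [app]

lemma pow_phi_emb (k : ℕ) (l : List (Fin 3)) : (phi ^ k) (emb l) = emb (app^[k] l) := by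
  induction k with
  | zero => simp
  | succ k ih =>
    rw [pow_succ', Function.iterate_succ_apply', ← phi_emb, ← ih]
    rfl

lemma pow_phi_of (k : ℕ) (e : Fin 3) : (phi ^ k) (FreeGroup.of e) = emb (itw k e) := by
  rw [← emb_of, pow_phi_emb, itw]

/-- Positive words are reduced. -/
lemma reduce_pos (l : List (Fin 3)) :
    FreeGroup.reduce (l.map fun i => (i, true)) = l.map fun i => (i, true) := by
  induction l with
  | nil => simp
  | cons x l ih =>
    rw [List.map_cons, FreeGroup.reduce.cons, ih]
    cases l with
    | nil => simp
    | cons y l => simp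

lemma toWord_emb (l : List (Fin 3)) :
    FreeGroup.toWord (emb l) = l.map fun i => (i, true) := by
  rw [emb, FreeGroup.toWord_mk, reduce_pos]

/-- allowed consecutive pairs: ca, ab, ac, bc, aa, ba -/
def S (x y : Fin 3) : Prop :=
  (x, y) ∈ [((2:Fin 3),(0:Fin 3)), (0,1), (0,2), (1,2), (0,0), (1,0)]

lemma head_app (l : List (Fin 3)) : ∀ y ∈ (app l).head?, y = 0 ∨ y = 2 := by
  cases l with
  | nil => simp [app]
  | cons x l =>
    have : app (x :: l) = W x ++ app l := by simp [app]
    rw [this]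
    fin_cases x <;> simp [W]

lemma chain'_app (l : List (Fin 3)) : (app l).Chain' S := by
  induction l with
  | nil => simp [app, List.Chain']
  | cons x l ih =>
    have hx : app (x :: l) = W x ++ app l := by simp [app]
    rw [hx, List.Chain', List.isChain_append]
    refine ⟨?_, ih, ?_⟩
    · fin_cases x <;> simp [W, S]
    · intro a ha b hb
      have hb' := head_app l b hb
      fin_cases x <;> simp [W] at ha <;> subst ha <;>
        rcases hb' with rfl | rfl <;> simp [S]

lemma crossed_of_infix (e : Fin 3) (k : ℕ) (hk : 1 ≤ k) (x y : Fin 3)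
    (h : [((x:Fin 3),true),((y:Fin 3),true)] <:+: (itw k e).map (fun i => (i, true))) :
    CrossedTurn s((x, false), (y, true)) := by
  refine ⟨e, k, hk, (x, true), (y, true), ?_, rfl⟩
  rw [pow_phi_of, toWord_emb]
  exact h

/-- The turns crossed by iterates of `φ` are exactly the six turns in `T`, and
the local Whitehead graph of `φ` (the graph on the six directions whose edges are
the turns in `T`) is connected. -/
theorem local_whitehead_graph_connected :
    {t : Sym2 (Fin 3 × Bool) | CrossedTurn t} = T ∧
      (SimpleGraph.fromRel (fun x y : Fin 3 × Bool => s(x, y) ∈ T)).Connected := by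
  constructor
  · ext t
    simp only [Set.mem_setOf_eq]
    constructor
    · rintro ⟨e, k, hk, u, v, hinf, ht⟩
      obtain ⟨k, rfl⟩ : ∃ k', k = k' + 1 := ⟨k - 1, (Nat.succ_pred_eq_of_pos hk).symm⟩
      rw [pow_phi_of, toWord_emb] at hinf
      have hit : itw (k + 1) e = app (itw k e) := Function.iterate_succ_apply' _ _ _
      rw [hit] at hinf
      have h1 : List.Chain' S (app (itw k e)) := chain'_app _
      have h2 : List.Chain' (fun p q : Fin 3 × Bool => p.2 = true ∧ q.2 = true ∧ S p.1 q.1)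
          ((app (itw k e)).map (fun i => (i, true))) :=
        (List.isChain_map _).2 (h1.imp fun _ _ h => ⟨rfl, rfl, h⟩)
      have h3 := h2.infix hinf
      rw [List.isChain_pair] at h3
      obtain ⟨hu, hv, hS⟩ := h3
      have hv' : v = (v.1, true) := Prod.ext rfl hv
      rw [ht, hu, hv']
      simp only [S, List.mem_cons, List.not_mem_nil, or_false,
        Prod.mk.injEq] at hS
      rcases hS with ⟨h1', h2'⟩ | ⟨h1', h2'⟩ | ⟨h1', h2'⟩ | ⟨h1', h2'⟩ | ⟨h1', h2'⟩ |
        ⟨h1', h2'⟩ <;> rw [h1', h2'] <;> simp [T]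
    · intro ht
      simp only [T, Set.mem_insert_iff, Set.mem_singleton_iff] at ht
      rcases ht with rfl | rfl | rfl | rfl | rfl | rfl
      · exact crossed_of_infix 0 1 le_rfl 2 0 (by decide)
      · exact crossed_of_infix 0 1 le_rfl 0 1 (by decide)
      · exact crossed_of_infix 2 1 le_rfl 0 2 (by decide)
      · exact crossed_of_infix 0 2 (by norm_num) 1 2 (by decide)
      · exact crossed_of_infix 0 3 (by norm_num) 0 0 (by decide)
      · exact crossed_of_infix 2 2 (by norm_num) 1 0 (by decide)
  · set G := SimpleGraph.fromRel (fun x y : Fin 3 × Bool => s(x, y) ∈ T) with hG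
    have adj : ∀ x y : Fin 3 × Bool, x ≠ y → s(x, y) ∈ T → G.Adj x y := by
      intro x y hne hmem
      rw [hG, SimpleGraph.fromRel_adj]
      exact ⟨hne, Or.inl hmem⟩
    have hub : ∀ z : Fin 3 × Bool, G.Reachable ((0 : Fin 3), true) z := by
      have h1 : G.Adj ((0:Fin 3), true) ((2:Fin 3), false) :=
        (adj ((2:Fin 3), false) ((0:Fin 3), true) (by decide) (by simp [T])).symm
      have h2 : G.Adj ((0:Fin 3), true) ((0:Fin 3), false) :=
        (adj ((0:Fin 3), false) ((0:Fin 3), true) (by decide) (by simp [T])).symm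
      have h3 : G.Adj ((0:Fin 3), true) ((1:Fin 3), false) :=
        (adj ((1:Fin 3), false) ((0:Fin 3), true) (by decide) (by simp [T])).symm
      have h4 : G.Adj ((0:Fin 3), false) ((1:Fin 3), true) :=
        adj _ _ (by decide) (by simp [T])
      have h5 : G.Adj ((0:Fin 3), false) ((2:Fin 3), true) :=
        adj _ _ (by decide) (by simp [T])
      intro z
      fin_cases z
      · exact SimpleGraph.Reachable.refl _
      · exact h2.reachable
      · exact (h2.reachable).trans h4.reachable
      · exact h3.reachable
      · exact (h2.reachable).trans h5.reachable
      · exact h1.reachable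
    exact SimpleGraph.Connected.mk fun x y => (hub x).symm.trans (hub y)
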